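/- Let F : Set → Set be a functor, F̄ a lifting of F to nominal sets (so that the forgetful functor commutes with them). If a coalgebra c : C → F̄C in nominal sets has the property that the underlying Set-coalgebra c : C → FC is locally finite (every element lies in a finite subcoalgebra), then c : C → F̄C is locally orbit-finite (every element lies in an orbit-finite subcoalgebra closed under the group action). -/

import Mathlib

/-- The subgroup of finite (finitary) permutations of the set `𝕍` of atoms. -/
def FinPerm (𝕍 : Type*) : Subgroup (Equiv.Perm 𝕍) where
  carrier := {π | {a | π a ≠ a}.Finite}
  one_mem' := by simp
  mul_mem' := by
    intro π σ hπ hσ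
    apply Set.Finite.subset (hσ.union (hπ.preimage σ.injective.injOn))
    intro a ha
    by_cases h : σ a = a
    · right
      simp only [Set.mem_preimage, Set.mem_setOf_eq]
      simpa [Equiv.Perm.mul_apply, h] using ha
    · exact Or.inl h
  inv_mem' := by
    intro π hπ
    have : {a | π⁻¹ a ≠ a} = {a | π a ≠ a} := by
      ext a
      simp only [Set.mem_setOf_eq, not_iff_not]
      rw [Equiv.Perm.inv_eq_iff_eq, eq_comm]
    show ({a | π⁻¹ a ≠ a} : Set 𝕍).Finite
    rw [this]
    exact hπ

open CategoryTheory

/-- Let `F̄` be a lifting of a `Set`-functor `F` to nominal sets (so the group acts on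
`F C`, the coalgebra structure `c` is equivariant, and `F` applied to equivariant subsets
is closed under the action). If the underlying `Set`-coalgebra `c : C → F C` is locally
finite, then `c : C → F̄ C` is locally orbit-finite: every element lies in an equivariant
orbit-finite subcoalgebra. -/
theorem stmt10 {𝕍 : Type} [Infinite 𝕍] (F : Type ⥤ Type) {C : Type}
    [MulAction (FinPerm 𝕍) C] [MulAction (FinPerm 𝕍) (F.obj C)]
    (hnom : ∀ x : C, ∃ S : Finset 𝕍, ∀ π : FinPerm 𝕍, (∀ a ∈ S, π • a = a) → π • x = x)
    (c : C → F.obj C)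
    (hc : ∀ (π : FinPerm 𝕍) (x : C), c (π • x) = π • c x)
    (hlift : ∀ Q : Set C, (∀ (π : FinPerm 𝕍), ∀ q ∈ Q, π • q ∈ Q) →
      ∀ (π : FinPerm 𝕍) (t : F.obj C), t ∈ Set.range (F.map (TypeCat.ofHom (fun q : Q => (q : C)))) →
        π • t ∈ Set.range (F.map (TypeCat.ofHom (fun q : Q => (q : C)))))
    (hlocfin : ∀ x : C, ∃ S : Set C, S.Finite ∧ x ∈ S ∧
      ∀ y ∈ S, c y ∈ Set.range (F.map (TypeCat.ofHom (fun q : S => (q : C))))) :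
    ∀ x : C, ∃ Q : Set C, x ∈ Q ∧ (∀ (π : FinPerm 𝕍), ∀ q ∈ Q, π • q ∈ Q) ∧
      (∃ T : Finset C, ∀ q ∈ Q, ∃ t ∈ T, q ∈ MulAction.orbit (FinPerm 𝕍) t) ∧
      ∀ y ∈ Q, c y ∈ Set.range (F.map (TypeCat.ofHom (fun q : Q => (q : C)))) := by
  intro x
  obtain ⟨S, hSfin, hxS, hSsub⟩ := hlocfin x
  set Q : Set C := {y | ∃ π : FinPerm 𝕍, ∃ s ∈ S, y = π • s} with hQ
  have hQequiv : ∀ (π : FinPerm 𝕍), ∀ q ∈ Q, π • q ∈ Q := by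
    rintro π q ⟨σ, s, hs, rfl⟩
    exact ⟨π * σ, s, hs, (mul_smul π σ s).symm⟩
  refine ⟨Q, ⟨1, x, hxS, (one_smul _ _).symm⟩, hQequiv, ⟨hSfin.toFinset, ?_⟩, ?_⟩
  · rintro q ⟨π, s, hs, rfl⟩
    exact ⟨s, hSfin.mem_toFinset.mpr hs, π, rfl⟩
  · rintro y ⟨π, s, hs, rfl⟩
    have hsub : Set.range (F.map (TypeCat.ofHom (fun q : S => (q : C)))) ⊆
        Set.range (F.map (TypeCat.ofHom (fun q : Q => (q : C)))) := by
      rintro t ⟨u, rfl⟩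
      refine ⟨F.map (TypeCat.ofHom (fun s : S => (⟨(s : C), 1, s, s.2, (one_smul _ _).symm⟩ : Q))) u, ?_⟩
      rw [← FunctorToTypes.map_comp_apply]
      rfl
    rw [hc]
    exact hlift Q hQequiv π (c s) (hsub (hSsub s hs))
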